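/- For an integer ℓ≥2 let 𝒜 be the set of continuously differentiable R:[a,π/2]→ℝ with R(a)=0 and R not identically zero, and for R∈𝒜 define the twisted Rayleigh quotient Q_ℓ(R) = [ ∫ₐ^{π/2}( (R′)² + V_ℓR² ) dx + (6Mk²/(ℓ(ℓ+1)−2)) R(π/2)² ] / [ ∫ₐ^{π/2} R² dx + (12M/(ℓ(ℓ+1)(ℓ(ℓ+1)−2))) R(π/2)² ] (the denominator is strictly positive). Then: (i) for every integer ℓ≥2 and every R∈𝒜, Q_ℓ(R) ≥ (k²/2)·ℓ(ℓ+1); (ii) for every η>0 there exists L such that for every integer ℓ≥L there exists R∈𝒜 with Q_ℓ(R) ≤ (k²+η)·ℓ(ℓ+1). Consequently, the infimum ω_ℓ² of Q_ℓ over 𝒜 satisfies (k²/2)ℓ(ℓ+1) ≤ ω_ℓ² ≤ (k²+η)ℓ(ℓ+1) for all sufficiently large ℓ. -/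

import Mathlib

/- The truncated "Robin" Regge–Wheeler eigenvalue problem on [a, π/2]
   (tortoise coordinate, truncated at r = 3M). -/

noncomputable section

open Filter Topology Set

namespace RWradial

/-- `Δ(r) = r² + k²r⁴ − 2Mr`. -/
def Del (M k r : ℝ) : ℝ := r ^ 2 + k ^ 2 * r ^ 4 - 2 * M * r

/-- `R` (with derivative data `R'`, `R''`) is a twice continuously differentiable
solution of the truncated "Robin" Regge–Wheeler eigenvalue problem on `[a, π/2]`:
`−R″ + V R = ω²R`, `R(a) = 0`, and the higher order "Robin" condition at `π/2`. -/
def EVPsol (M k a : ℝ) (V : ℝ → ℝ) (ℓ : ℕ) (ω : ℝ) (R R' R'' : ℝ → ℝ) : Prop :=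
  (∀ x ∈ Set.Icc a (Real.pi / 2), HasDerivWithinAt R (R' x) (Set.Icc a (Real.pi / 2)) x) ∧
  (∀ x ∈ Set.Icc a (Real.pi / 2), HasDerivWithinAt R' (R'' x) (Set.Icc a (Real.pi / 2)) x) ∧
  ContinuousOn R'' (Set.Icc a (Real.pi / 2)) ∧
  (∀ x ∈ Set.Icc a (Real.pi / 2), -R'' x + V x * R x = ω ^ 2 * R x) ∧
  R a = 0 ∧
  (-2 * ω ^ 2 * R (Real.pi / 2)
    + ((ℓ : ℝ) * ((ℓ : ℝ) + 1) * ((ℓ : ℝ) * ((ℓ : ℝ) + 1) - 2) / (6 * M)) * R' (Real.pi / 2)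
    + k ^ 2 * ((ℓ : ℝ) * ((ℓ : ℝ) + 1)) * R (Real.pi / 2) = 0)

/-- The admissible class `𝒜`: continuously differentiable `R : [a,π/2] → ℝ`
(with derivative data `R'`) with `R(a) = 0` and `R` not identically zero. -/
def admis (a : ℝ) (R R' : ℝ → ℝ) : Prop :=
  (∀ x ∈ Set.Icc a (Real.pi / 2), HasDerivWithinAt R (R' x) (Set.Icc a (Real.pi / 2)) x) ∧
  ContinuousOn R' (Set.Icc a (Real.pi / 2)) ∧
  R a = 0 ∧ (∃ x ∈ Set.Icc a (Real.pi / 2), R x ≠ 0)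

/-- The numerator of the twisted Rayleigh quotient `Q_ℓ`. -/
def numQ (M k a : ℝ) (V : ℝ → ℝ) (ℓ : ℕ) (R R' : ℝ → ℝ) : ℝ :=
  (∫ x in a..(Real.pi / 2), ((R' x) ^ 2 + V x * (R x) ^ 2))
    + (6 * M * k ^ 2 / ((ℓ : ℝ) * ((ℓ : ℝ) + 1) - 2)) * (R (Real.pi / 2)) ^ 2

/-- The denominator of the twisted Rayleigh quotient `Q_ℓ`. -/
def denQ (M a : ℝ) (ℓ : ℕ) (R : ℝ → ℝ) : ℝ :=
  (∫ x in a..(Real.pi / 2), (R x) ^ 2)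
    + (12 * M / ((ℓ : ℝ) * ((ℓ : ℝ) + 1) * ((ℓ : ℝ) * ((ℓ : ℝ) + 1) - 2))) *
        (R (Real.pi / 2)) ^ 2

open MeasureTheory in
private lemma aux_sq_integral_pos {g : ℝ → ℝ} {a c y : ℝ} (hac : a < c)
    (hg : ContinuousOn g (Set.Icc a c)) (hy : y ∈ Set.Ioo a c) (hgy : g y ≠ 0) :
    0 < ∫ x in a..c, (g x) ^ 2 := by
  have hgc : ContinuousOn (fun x => (g x) ^ 2) (Set.Icc a c) := hg.pow 2
  have hca : ContinuousAt (fun x => (g x) ^ 2) y :=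
    hgc.continuousAt (Icc_mem_nhds hy.1 hy.2)
  have hpos : (0:ℝ) < (g y) ^ 2 := by positivity
  have hU : (fun x => (g x) ^ 2) ⁻¹' Set.Ioi 0 ∈ nhds y := hca (Ioi_mem_nhds hpos)
  rcases mem_nhds_iff_exists_Ioo_subset.mp hU with ⟨u, v, hyuv, hsub⟩
  set u' := max a u with hu'
  set v' := min c v with hv'
  have hau' : a ≤ u' := le_max_left _ _
  have hv'c : v' ≤ c := min_le_left _ _
  have hu'y : u' < y := max_lt hy.1 hyuv.1
  have hyv' : y < v' := lt_min hy.2 hyuv.2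
  have hint : ∀ p q : ℝ, a ≤ p → p ≤ q → q ≤ c →
      IntervalIntegrable (fun x => (g x) ^ 2) volume p q := by
    intro p q h1 h2 h3
    apply ContinuousOn.intervalIntegrable
    apply hgc.mono
    rw [Set.uIcc_of_le h2]
    exact Set.Icc_subset_Icc h1 h3
  have e1 : (∫ x in a..u', (g x) ^ 2) + (∫ x in u'..c, (g x) ^ 2) = ∫ x in a..c, (g x) ^ 2 :=
    intervalIntegral.integral_add_adjacent_intervals (hint a u' le_rfl hau' (by linarith))
      (hint u' c hau' (by linarith) le_rfl)
  have e2 : (∫ x in u'..v', (g x) ^ 2) + (∫ x in v'..c, (g x) ^ 2) = ∫ x in u'..c, (g x) ^ 2 :=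
    intervalIntegral.integral_add_adjacent_intervals (hint u' v' hau' (by linarith) hv'c)
      (hint v' c (by linarith) hv'c le_rfl)
  have h1 : 0 ≤ ∫ x in a..u', (g x) ^ 2 :=
    intervalIntegral.integral_nonneg hau' (fun x _ => sq_nonneg _)
  have h3 : 0 ≤ ∫ x in v'..c, (g x) ^ 2 :=
    intervalIntegral.integral_nonneg hv'c (fun x _ => sq_nonneg _)
  have h2 : 0 < ∫ x in u'..v', (g x) ^ 2 := by
    apply intervalIntegral.intervalIntegral_pos_of_pos_on
      (hint u' v' hau' (by linarith) hv'c) ?_ (by linarith)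
    intro x hx
    exact hsub ⟨(le_max_right a u).trans_lt hx.1, hx.2.trans_le (min_le_right c v)⟩
  linarith

private lemma aux_hasDerivAt_maxsq (b x : ℝ) :
    HasDerivAt (fun y => max (y - b) 0 ^ 2) (2 * max (x - b) 0) x := by
  rcases lt_trichotomy x b with h | h | h
  · have hm : max (x - b) 0 = 0 := max_eq_right (by linarith)
    rw [hm, mul_zero]
    have h0 : HasDerivAt (fun _ : ℝ => (0:ℝ)) 0 x := hasDerivAt_const x 0
    apply h0.congr_of_eventuallyEq
    filter_upwards [Iio_mem_nhds h] with y hy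
    have : max (y - b) 0 = 0 := max_eq_right (by simp only [Set.mem_Iio] at hy; linarith)
    simp [this]
  · subst h
    have hm : (2:ℝ) * max (x - x) 0 = 0 := by simp
    rw [hm]
    rw [hasDerivAt_iff_isLittleO]
    simp only [sub_self, max_self, ne_eq, smul_zero, sub_zero]
    have hz : max ((0:ℝ) - 0) 0 ^ 2 = 0 := by norm_num
    rw [Asymptotics.isLittleO_iff]
    intro c hc
    filter_upwards [Metric.ball_mem_nhds x hc] with y hy
    rw [Metric.mem_ball, Real.dist_eq] at hy
    have h0 : 0 ≤ max (y - x) 0 := le_max_right _ _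
    have h1 : max (y - x) 0 ≤ |y - x| := by
      rcases le_total (y - x) 0 with h' | h'
      · rw [max_eq_right h']; exact abs_nonneg _
      · rw [max_eq_left h']; exact le_abs_self _
    rw [show ((0:ℝ)) ^ 2 = 0 by norm_num, sub_zero, Real.norm_eq_abs, Real.norm_eq_abs,
      abs_of_nonneg (sq_nonneg _)]
    nlinarith [abs_nonneg (y - x)]
  · have hm : max (x - b) 0 = x - b := max_eq_left (by linarith)
    rw [hm]
    have h0 : HasDerivAt (fun y : ℝ => (y - b) ^ 2) (2 * (x - b)) x := by
      have := ((hasDerivAt_id x).sub_const b).fun_pow 2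
      simpa using this
    apply h0.congr_of_eventuallyEq
    filter_upwards [Ioi_mem_nhds h] with y hy
    have : max (y - b) 0 = y - b :=
      max_eq_left (by simp only [Set.mem_Ioi] at hy; linarith)
    simp [this]

private lemma aux_lam_ge (ℓ : ℕ) (hℓ : 2 ≤ ℓ) : (6:ℝ) ≤ (ℓ:ℝ) * ((ℓ:ℝ) + 1) := by
  have h : (2:ℝ) ≤ (ℓ:ℝ) := by exact_mod_cast hℓ
  nlinarith

private lemma aux_part_i (M k a : ℝ) (hM : 0 < M) (hk : 0 < k) (ha : a < Real.pi / 2)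
    (ρ W : ℝ → ℝ) (V : ℕ → ℝ → ℝ)
    (hρge : ∀ x ∈ Set.Ico a (Real.pi / 2), 3 * M ≤ ρ x)
    (hW : ∀ x ∈ Set.Ico a (Real.pi / 2), W x = Del M k (ρ x) / (ρ x) ^ 4)
    (hV : ∀ ℓ : ℕ, 2 ≤ ℓ → ∀ x ∈ Set.Ico a (Real.pi / 2),
      V ℓ x = W x * ((ℓ : ℝ) * ((ℓ : ℝ) + 1) - 6 * M / ρ x))
    (hVend : ∀ ℓ : ℕ, 2 ≤ ℓ → V ℓ (Real.pi / 2) = k ^ 2 * ((ℓ : ℝ) * ((ℓ : ℝ) + 1)))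
    (hVcont : ∀ ℓ : ℕ, 2 ≤ ℓ → ContinuousOn (V ℓ) (Set.Icc a (Real.pi / 2))) :
    ∀ ℓ : ℕ, 2 ≤ ℓ → ∀ R R' : ℝ → ℝ, admis a R R' →
      0 < denQ M a ℓ R ∧
        (k ^ 2 / 2) * ((ℓ : ℝ) * ((ℓ : ℝ) + 1)) ≤ numQ M k a (V ℓ) ℓ R R' / denQ M a ℓ R := by
  intro ℓ hℓ R R' hadm
  obtain ⟨hRd, hR'c, hRa, x₀, hx₀, hRx₀⟩ := hadm
  have hab : a ≤ Real.pi / 2 := ha.le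
  have hUeq : Set.uIcc a (Real.pi / 2) = Set.Icc a (Real.pi / 2) := Set.uIcc_of_le hab
  have hlam6 : (6:ℝ) ≤ (ℓ:ℝ) * ((ℓ:ℝ) + 1) := aux_lam_ge ℓ hℓ
  have hRc : ContinuousOn R (Set.Icc a (Real.pi / 2)) :=
    fun x hx => (hRd x hx).continuousWithinAt
  have hVlb : ∀ x ∈ Set.Icc a (Real.pi / 2),
      (k ^ 2 / 2) * ((ℓ:ℝ) * ((ℓ:ℝ) + 1)) ≤ V ℓ x := by
    intro x hx
    rcases eq_or_lt_of_le hx.2 with h | h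
    · rw [h, hVend ℓ hℓ]
      nlinarith [sq_nonneg k]
    · have hxI : x ∈ Set.Ico a (Real.pi / 2) := ⟨hx.1, h⟩
      rw [hV ℓ hℓ x hxI, hW x hxI]
      have hρ3 : 3 * M ≤ ρ x := hρge x hxI
      have hρpos : 0 < ρ x := by linarith
      have hWlb : k ^ 2 ≤ Del M k (ρ x) / (ρ x) ^ 4 := by
        rw [le_div_iff₀ (by positivity)]
        unfold Del
        nlinarith
      have h6 : 6 * M / ρ x ≤ 2 := by rw [div_le_iff₀ hρpos]; linarith
      have h6' : 0 ≤ 6 * M / ρ x := by positivity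
      calc (k ^ 2 / 2) * ((ℓ:ℝ) * ((ℓ:ℝ) + 1))
          = k ^ 2 * (((ℓ:ℝ) * ((ℓ:ℝ) + 1)) / 2) := by ring
        _ ≤ (Del M k (ρ x) / (ρ x) ^ 4) * ((ℓ:ℝ) * ((ℓ:ℝ) + 1) - 6 * M / ρ x) :=
            mul_le_mul hWlb (by linarith) (by linarith) ((sq_nonneg k).trans hWlb)
  have hInt2 : IntervalIntegrable (fun x => R x ^ 2) MeasureTheory.volume a (Real.pi / 2) :=
    ContinuousOn.intervalIntegrable (by rw [hUeq]; exact hRc.pow 2)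
  have hIntN : IntervalIntegrable (fun x => R' x ^ 2 + V ℓ x * R x ^ 2)
      MeasureTheory.volume a (Real.pi / 2) :=
    ContinuousOn.intervalIntegrable
      (by rw [hUeq]; exact (hR'c.pow 2).add ((hVcont ℓ hℓ).mul (hRc.pow 2)))
  have hIntL : IntervalIntegrable
      (fun x => ((k ^ 2 / 2) * ((ℓ:ℝ) * ((ℓ:ℝ) + 1))) * R x ^ 2)
      MeasureTheory.volume a (Real.pi / 2) := hInt2.const_mul _
  have hI0 : 0 ≤ ∫ x in a..(Real.pi / 2), R x ^ 2 :=
    intervalIntegral.integral_nonneg hab (fun x _ => sq_nonneg _)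
  have hlampos : (0:ℝ) < ((ℓ:ℝ) * ((ℓ:ℝ) + 1)) * (((ℓ:ℝ) * ((ℓ:ℝ) + 1)) - 2) := by nlinarith
  have hc0 : 0 < 12 * M / (((ℓ:ℝ) * ((ℓ:ℝ) + 1)) * (((ℓ:ℝ) * ((ℓ:ℝ) + 1)) - 2)) :=
    div_pos (by linarith) hlampos
  have hden : 0 < denQ M a ℓ R := by
    unfold denQ
    by_cases hB : R (Real.pi / 2) = 0
    · have hx₀a : x₀ ≠ a := fun h => hRx₀ (h ▸ hRa)
      have hx₀b : x₀ ≠ Real.pi / 2 := fun h => hRx₀ (h ▸ hB)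
      have hx₀' : x₀ ∈ Set.Ioo a (Real.pi / 2) :=
        ⟨lt_of_le_of_ne hx₀.1 (Ne.symm hx₀a), lt_of_le_of_ne hx₀.2 hx₀b⟩
      have hip := aux_sq_integral_pos ha hRc hx₀' hRx₀
      rw [hB]
      simpa using hip
    · have hBp : 0 < (R (Real.pi / 2)) ^ 2 := by positivity
      nlinarith [mul_pos hc0 hBp]
  refine ⟨hden, ?_⟩
  rw [le_div_iff₀ hden]
  have hmono := intervalIntegral.integral_mono_on hab hIntL hIntN (fun x hx => by
    nlinarith [mul_le_mul_of_nonneg_right (hVlb x hx) (sq_nonneg (R x)), sq_nonneg (R' x)])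
  rw [intervalIntegral.integral_const_mul] at hmono
  have h1 : ((ℓ:ℝ) * ((ℓ:ℝ) + 1)) ≠ 0 := by nlinarith
  have h2 : ((ℓ:ℝ) * ((ℓ:ℝ) + 1)) - 2 ≠ 0 := by nlinarith
  have hc : (k ^ 2 / 2) * ((ℓ:ℝ) * ((ℓ:ℝ) + 1)) *
      (12 * M / (((ℓ:ℝ) * ((ℓ:ℝ) + 1)) * (((ℓ:ℝ) * ((ℓ:ℝ) + 1)) - 2)))
      = 6 * M * k ^ 2 / (((ℓ:ℝ) * ((ℓ:ℝ) + 1)) - 2) := by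
    field_simp
    ring
  unfold numQ denQ
  have hB2 : 0 ≤ (R (Real.pi / 2)) ^ 2 := sq_nonneg _
  calc (k ^ 2 / 2) * ((ℓ:ℝ) * ((ℓ:ℝ) + 1)) *
        ((∫ x in a..(Real.pi / 2), (R x) ^ 2) +
          (12 * M / (((ℓ:ℝ) * ((ℓ:ℝ) + 1)) * (((ℓ:ℝ) * ((ℓ:ℝ) + 1)) - 2))) *
            (R (Real.pi / 2)) ^ 2)
      = (k ^ 2 / 2) * ((ℓ:ℝ) * ((ℓ:ℝ) + 1)) * (∫ x in a..(Real.pi / 2), (R x) ^ 2) +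
        ((k ^ 2 / 2) * ((ℓ:ℝ) * ((ℓ:ℝ) + 1)) *
          (12 * M / (((ℓ:ℝ) * ((ℓ:ℝ) + 1)) * (((ℓ:ℝ) * ((ℓ:ℝ) + 1)) - 2)))) *
          (R (Real.pi / 2)) ^ 2 := by ring
    _ ≤ (∫ x in a..(Real.pi / 2), ((R' x) ^ 2 + V ℓ x * (R x) ^ 2)) +
        (6 * M * k ^ 2 / (((ℓ:ℝ) * ((ℓ:ℝ) + 1)) - 2)) * (R (Real.pi / 2)) ^ 2 := by
        rw [hc]
        exact add_le_add hmono le_rfl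

set_option maxHeartbeats 2000000 in
private lemma aux_part_ii (M k a : ℝ) (hM : 0 < M) (hk : 0 < k) (ha : a < Real.pi / 2)
    (ρ W : ℝ → ℝ) (V : ℕ → ℝ → ℝ)
    (hρge : ∀ x ∈ Set.Ico a (Real.pi / 2), 3 * M ≤ ρ x)
    (hW : ∀ x ∈ Set.Ico a (Real.pi / 2), W x = Del M k (ρ x) / (ρ x) ^ 4)
    (hWend : W (Real.pi / 2) = k ^ 2)
    (hWcont : ContinuousOn W (Set.Icc a (Real.pi / 2)))
    (hV : ∀ ℓ : ℕ, 2 ≤ ℓ → ∀ x ∈ Set.Ico a (Real.pi / 2),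
      V ℓ x = W x * ((ℓ : ℝ) * ((ℓ : ℝ) + 1) - 6 * M / ρ x))
    (hVend : ∀ ℓ : ℕ, 2 ≤ ℓ → V ℓ (Real.pi / 2) = k ^ 2 * ((ℓ : ℝ) * ((ℓ : ℝ) + 1)))
    (hVcont : ∀ ℓ : ℕ, 2 ≤ ℓ → ContinuousOn (V ℓ) (Set.Icc a (Real.pi / 2))) :
    ∀ η : ℝ, 0 < η → ∃ L : ℕ, ∀ ℓ : ℕ, L ≤ ℓ →
      ∃ R R' : ℝ → ℝ, admis a R R' ∧
        numQ M k a (V ℓ) ℓ R R' / denQ M a ℓ R ≤ (k ^ 2 + η) * ((ℓ : ℝ) * ((ℓ : ℝ) + 1)) := by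
  intro η hη
  have hab : a ≤ Real.pi / 2 := ha.le
  have hUeq : Set.uIcc a (Real.pi / 2) = Set.Icc a (Real.pi / 2) := Set.uIcc_of_le hab
  -- choose b with W < k² + η/2 on (b, π/2]
  have hWc2 : ContinuousWithinAt W (Set.Icc a (Real.pi / 2)) (Real.pi / 2) :=
    hWcont _ (Set.right_mem_Icc.mpr hab)
  have hmem : W ⁻¹' Set.Iio (k ^ 2 + η / 2) ∈ 𝓝[Set.Icc a (Real.pi / 2)] (Real.pi / 2) :=
    hWc2 (Iio_mem_nhds (by rw [hWend]; linarith))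
  rw [nhdsWithin_Icc_eq_nhdsLE ha] at hmem
  rcases mem_nhdsLE_iff_exists_Ioc_subset.mp hmem with ⟨b', hb', hsub⟩
  set b := max a b' with hbdef
  have hba : a ≤ b := le_max_left _ _
  have hbb' : b' ≤ b := le_max_right _ _
  have hblt : b < Real.pi / 2 := max_lt ha hb'
  -- the test function
  set R : ℝ → ℝ := fun x => max (x - b) 0 ^ 2 with hRdef
  set R' : ℝ → ℝ := fun x => 2 * max (x - b) 0 with hR'def
  have hder : ∀ x, HasDerivAt R (R' x) x := fun x => aux_hasDerivAt_maxsq b x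
  have hR'c : Continuous R' :=
    continuous_const.mul ((continuous_id.sub continuous_const).max continuous_const)
  have hRc : Continuous R :=
    ((continuous_id.sub continuous_const).max continuous_const).pow 2
  have hRb : ∀ x, x ≤ b → R x = 0 := by
    intro x hx
    simp only [hRdef]
    rw [max_eq_right (by linarith)]
    norm_num
  have hRpos : ∀ x, b < x → 0 < R x := by
    intro x hx
    simp only [hRdef]
    rw [max_eq_left (by linarith)]
    exact pow_pos (by linarith) 2
  have hadm : admis a R R' :=
    ⟨fun x _ => (hder x).hasDerivWithinAt, hR'c.continuousOn, hRb a hba,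
      ⟨Real.pi / 2, Set.right_mem_Icc.mpr hab, (hRpos _ hblt).ne'⟩⟩
  set C1 := ∫ x in a..(Real.pi / 2), R' x ^ 2 with hC1def
  set D := ∫ x in a..(Real.pi / 2), R x ^ 2 with hDdef
  have hDpos : 0 < D := by
    apply aux_sq_integral_pos ha hRc.continuousOn
      (y := (b + Real.pi / 2) / 2) ⟨by linarith, by linarith⟩
    exact (hRpos _ (by linarith)).ne'
  have hC1nn : 0 ≤ C1 :=
    intervalIntegral.integral_nonneg hab (fun x _ => sq_nonneg _)
  refine ⟨max 2 (⌈2 * C1 / (η * D)⌉₊ + 1), fun ℓ hℓ => ?_⟩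
  have hℓ2 : 2 ≤ ℓ := le_trans (le_max_left _ _) hℓ
  have hlam6 : (6:ℝ) ≤ (ℓ:ℝ) * ((ℓ:ℝ) + 1) := aux_lam_ge ℓ hℓ2
  have hℓceil : (⌈2 * C1 / (η * D)⌉₊ + 1 : ℕ) ≤ ℓ := le_trans (le_max_right _ _) hℓ
  have hlamC : 2 * C1 / (η * D) ≤ (ℓ:ℝ) * ((ℓ:ℝ) + 1) := by
    have h1 : 2 * C1 / (η * D) ≤ (⌈2 * C1 / (η * D)⌉₊ : ℝ) := Nat.le_ceil _
    have h2 : ((⌈2 * C1 / (η * D)⌉₊ + 1 : ℕ) : ℝ) ≤ (ℓ:ℝ) := by exact_mod_cast hℓceil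
    push_cast at h2
    have h3 : (0:ℝ) ≤ (ℓ:ℝ) := Nat.cast_nonneg ℓ
    nlinarith
  have hC1le : C1 ≤ (η / 2) * ((ℓ:ℝ) * ((ℓ:ℝ) + 1)) * D := by
    rw [div_le_iff₀ (mul_pos hη hDpos)] at hlamC
    nlinarith
  refine ⟨R, R', hadm, ?_⟩
  -- pointwise bound on V·R²
  have hpt : ∀ x ∈ Set.Icc a (Real.pi / 2),
      V ℓ x * R x ^ 2 ≤ ((k ^ 2 + η / 2) * ((ℓ:ℝ) * ((ℓ:ℝ) + 1))) * R x ^ 2 := by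
    intro x hx
    rcases le_or_gt x b with hxb | hxb
    · rw [hRb x hxb]; norm_num
    · have hWx : W x < k ^ 2 + η / 2 := hsub ⟨lt_of_le_of_lt hbb' hxb, hx.2⟩
      apply mul_le_mul_of_nonneg_right ?_ (sq_nonneg _)
      rcases eq_or_lt_of_le hx.2 with h | h
      · rw [h, hVend ℓ hℓ2]
        nlinarith [sq_nonneg k]
      · have hxI : x ∈ Set.Ico a (Real.pi / 2) := ⟨hx.1, h⟩
        rw [hV ℓ hℓ2 x hxI]
        have hρ3 := hρge x hxI
        have hρpos : 0 < ρ x := by linarith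
        have h6 : 6 * M / ρ x ≤ 2 := by rw [div_le_iff₀ hρpos]; linarith
        have h6' : 0 ≤ 6 * M / ρ x := by positivity
        have hW0 : 0 ≤ W x := by
          rw [hW x hxI]
          have h4 : (0:ℝ) < (ρ x) ^ 4 := by positivity
          rw [le_div_iff₀ h4]
          unfold Del
          nlinarith
        exact mul_le_mul hWx.le (by linarith) (by linarith) (by positivity)
  -- integral estimates
  have hVc := hVcont ℓ hℓ2
  have hIntV : IntervalIntegrable (fun x => V ℓ x * R x ^ 2)
      MeasureTheory.volume a (Real.pi / 2) :=
    ContinuousOn.intervalIntegrable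
      (by rw [hUeq]; exact hVc.mul (hRc.pow 2).continuousOn)
  have hIntc : IntervalIntegrable
      (fun x => ((k ^ 2 + η / 2) * ((ℓ:ℝ) * ((ℓ:ℝ) + 1))) * R x ^ 2)
      MeasureTheory.volume a (Real.pi / 2) :=
    ((hRc.pow 2).intervalIntegrable _ _).const_mul _
  have hIntR' : IntervalIntegrable (fun x => R' x ^ 2)
      MeasureTheory.volume a (Real.pi / 2) := (hR'c.pow 2).intervalIntegrable _ _
  have hsplit : (∫ x in a..(Real.pi / 2), (R' x ^ 2 + V ℓ x * R x ^ 2))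
      = C1 + ∫ x in a..(Real.pi / 2), V ℓ x * R x ^ 2 :=
    intervalIntegral.integral_add hIntR' hIntV
  have hJ : (∫ x in a..(Real.pi / 2), V ℓ x * R x ^ 2)
      ≤ ((k ^ 2 + η / 2) * ((ℓ:ℝ) * ((ℓ:ℝ) + 1))) * D := by
    have hm := intervalIntegral.integral_mono_on hab hIntV hIntc hpt
    rwa [intervalIntegral.integral_const_mul] at hm
  have hlampos : (0:ℝ) < ((ℓ:ℝ) * ((ℓ:ℝ) + 1)) * (((ℓ:ℝ) * ((ℓ:ℝ) + 1)) - 2) :=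
    mul_pos (by linarith) (by linarith)
  have hc0 : 0 < 12 * M / (((ℓ:ℝ) * ((ℓ:ℝ) + 1)) * (((ℓ:ℝ) * ((ℓ:ℝ) + 1)) - 2)) :=
    div_pos (by linarith) hlampos
  have hB2 : 0 ≤ R (Real.pi / 2) ^ 2 := sq_nonneg _
  clear_value R R' C1 D
  have h1 : ((ℓ:ℝ) * ((ℓ:ℝ) + 1)) ≠ 0 := ne_of_gt (by linarith)
  have h2 : ((ℓ:ℝ) * ((ℓ:ℝ) + 1)) - 2 ≠ 0 := ne_of_gt (by linarith)
  have hcb : 6 * M * k ^ 2 / (((ℓ:ℝ) * ((ℓ:ℝ) + 1)) - 2)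
      ≤ ((k ^ 2 + η) * ((ℓ:ℝ) * ((ℓ:ℝ) + 1))) *
        (12 * M / (((ℓ:ℝ) * ((ℓ:ℝ) + 1)) * (((ℓ:ℝ) * ((ℓ:ℝ) + 1)) - 2))) := by
    have heq : 6 * M * k ^ 2 / (((ℓ:ℝ) * ((ℓ:ℝ) + 1)) - 2)
        = ((k ^ 2 / 2) * ((ℓ:ℝ) * ((ℓ:ℝ) + 1))) *
          (12 * M / (((ℓ:ℝ) * ((ℓ:ℝ) + 1)) * (((ℓ:ℝ) * ((ℓ:ℝ) + 1)) - 2))) := by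
      field_simp
      ring
    rw [heq]
    apply mul_le_mul_of_nonneg_right ?_ hc0.le
    nlinarith [sq_nonneg k]
  have hmain : numQ M k a (V ℓ) ℓ R R'
      ≤ ((k ^ 2 + η) * ((ℓ:ℝ) * ((ℓ:ℝ) + 1))) * denQ M a ℓ R := by
    unfold numQ denQ
    rw [← hDdef, hsplit]
    linarith [mul_le_mul_of_nonneg_right hcb hB2, hJ, hC1le]
  have hden : 0 < denQ M a ℓ R := by
    unfold denQ
    rw [← hDdef]
    linarith [mul_nonneg hc0.le hB2, hDpos]
  rw [div_le_iff₀ hden]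
  exact hmain

/-- Two-sided bounds on the twisted Rayleigh quotient: (i) the
pointwise lower bound `(k²/2)ℓ(ℓ+1)` (and strict positivity of the denominator), (ii)
near-optimal test functions for large `ℓ`, and consequently (iii) the two-sided bound
`(k²/2)ℓ(ℓ+1) ≤ ω_ℓ² ≤ (k²+η)ℓ(ℓ+1)` for the infimum `ω_ℓ²` of the quotient, for all
sufficiently large `ℓ`. -/
theorem statement16
    (M k a : ℝ) (hM : 0 < M) (hk : 0 < k) (ha : a < Real.pi / 2)
    (ρ W : ℝ → ℝ) (V : ℕ → ℝ → ℝ)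
    (hρa : ρ a = 3 * M)
    (hρge : ∀ x ∈ Set.Ico a (Real.pi / 2), 3 * M ≤ ρ x)
    (hρd : ∀ x ∈ Set.Ico a (Real.pi / 2),
      HasDerivWithinAt ρ (Del M k (ρ x) / (ρ x) ^ 2) (Set.Ico a (Real.pi / 2)) x)
    (hρtop : Tendsto ρ (𝓝[<] (Real.pi / 2)) atTop)
    (hW : ∀ x ∈ Set.Ico a (Real.pi / 2), W x = Del M k (ρ x) / (ρ x) ^ 4)
    (hWend : W (Real.pi / 2) = k ^ 2)
    (hWcont : ContinuousOn W (Set.Icc a (Real.pi / 2)))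
    (hV : ∀ ℓ : ℕ, 2 ≤ ℓ → ∀ x ∈ Set.Ico a (Real.pi / 2),
      V ℓ x = W x * ((ℓ : ℝ) * ((ℓ : ℝ) + 1) - 6 * M / ρ x))
    (hVend : ∀ ℓ : ℕ, 2 ≤ ℓ → V ℓ (Real.pi / 2) = k ^ 2 * ((ℓ : ℝ) * ((ℓ : ℝ) + 1)))
    (hVcont : ∀ ℓ : ℕ, 2 ≤ ℓ → ContinuousOn (V ℓ) (Set.Icc a (Real.pi / 2))) :
    -- (i)
    (∀ ℓ : ℕ, 2 ≤ ℓ → ∀ R R' : ℝ → ℝ, admis a R R' →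
      0 < denQ M a ℓ R ∧
        (k ^ 2 / 2) * ((ℓ : ℝ) * ((ℓ : ℝ) + 1)) ≤ numQ M k a (V ℓ) ℓ R R' / denQ M a ℓ R)
    ∧
    -- (ii)
    (∀ η : ℝ, 0 < η → ∃ L : ℕ, ∀ ℓ : ℕ, L ≤ ℓ →
      ∃ R R' : ℝ → ℝ, admis a R R' ∧
        numQ M k a (V ℓ) ℓ R R' / denQ M a ℓ R ≤ (k ^ 2 + η) * ((ℓ : ℝ) * ((ℓ : ℝ) + 1)))
    ∧
    -- (iii)
    (∀ η : ℝ, 0 < η → ∃ L : ℕ, ∀ ℓ : ℕ, L ≤ ℓ →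
      (k ^ 2 / 2) * ((ℓ : ℝ) * ((ℓ : ℝ) + 1)) ≤
          sInf {q : ℝ | ∃ R R' : ℝ → ℝ,
            admis a R R' ∧ q = numQ M k a (V ℓ) ℓ R R' / denQ M a ℓ R}
        ∧ sInf {q : ℝ | ∃ R R' : ℝ → ℝ,
            admis a R R' ∧ q = numQ M k a (V ℓ) ℓ R R' / denQ M a ℓ R} ≤
              (k ^ 2 + η) * ((ℓ : ℝ) * ((ℓ : ℝ) + 1))) := by
  have hpi := aux_part_i M k a hM hk ha ρ W V hρge hW hV hVend hVcont
  have hpii := aux_part_ii M k a hM hk ha ρ W V hρge hW hWend hWcont hV hVend hVcont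
  refine ⟨hpi, hpii, ?_⟩
  intro η hη
  obtain ⟨L, hL⟩ := hpii η hη
  refine ⟨max L 2, fun ℓ hℓ => ?_⟩
  have hℓ2 : 2 ≤ ℓ := le_trans (le_max_right _ _) hℓ
  have hℓL : L ≤ ℓ := le_trans (le_max_left _ _) hℓ
  obtain ⟨R, R', hadm, hQ⟩ := hL ℓ hℓL
  have hqS : numQ M k a (V ℓ) ℓ R R' / denQ M a ℓ R ∈
      {q : ℝ | ∃ R R' : ℝ → ℝ, admis a R R' ∧ q = numQ M k a (V ℓ) ℓ R R' / denQ M a ℓ R} :=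
    ⟨R, R', hadm, rfl⟩
  have hlb : ∀ q ∈ {q : ℝ | ∃ R R' : ℝ → ℝ,
      admis a R R' ∧ q = numQ M k a (V ℓ) ℓ R R' / denQ M a ℓ R},
      (k ^ 2 / 2) * ((ℓ:ℝ) * ((ℓ:ℝ) + 1)) ≤ q := by
    rintro q ⟨S, S', hS, rfl⟩
    exact (hpi ℓ hℓ2 S S' hS).2
  have hbdd : BddBelow {q : ℝ | ∃ R R' : ℝ → ℝ,
      admis a R R' ∧ q = numQ M k a (V ℓ) ℓ R R' / denQ M a ℓ R} := ⟨_, hlb⟩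
  exact ⟨le_csInf ⟨_, hqS⟩ hlb, le_trans (csInf_le hbdd hqS) hQ⟩


end RWradial
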